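/- Let (Θ, d) be a metric space with its Borel σ-algebra, μ a probability measure on Θ, and Φ1, Φ2 : Θ → ℝ measurable with 0 < Z_{Φi,μ} < ∞ for i = 1, 2. Then: (i) for every bounded measurable f : Θ → ℝ, ∫ f dμ_{Φ1} − ∫ f dμ_{Φ2} = Z_{Φ1,μ}⁻¹ ( ∫ f (e^{−Φ1} − e^{−Φ2}) dμ + (Z_{Φ2,μ} − Z_{Φ1,μ}) ∫ f dμ_{Φ2} ). (ii) If Z_{Φ1,μ} = Z_{Φ2,μ} and g := e^{−Φ1} − e^{−Φ2} satisfies 0 < K := ‖g‖_{Lip(supp μ, d)} < ∞, then the supremum over all functions f that are 1-Lipschitz on supp μ of |∫ f dμ_{Φ1} − ∫ f dμ_{Φ2}| is at least Z_{Φ1,μ}⁻¹ ‖g‖²_{L²_μ} / K; if in addition Φ1, Φ2 are μ-essentially bounded, this supremum is at least ( min(exp(−2‖Φ1‖_{L^∞_μ}), exp(−2‖Φ2‖_{L^∞_μ})) / Z_{Φ1,μ} ) · ‖Φ1 − Φ2‖²_{L²_μ} / K. -/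

import Mathlib

open MeasureTheory Real
open scoped ENNReal Topology
open Filter

namespace PaperStmt

variable {Θ : Type*}

/-- The evidence `Z_{Φ,μ} = ∫ exp (-Φ) dμ`. -/
noncomputable def evid [MeasurableSpace Θ] (μ : Measure Θ) (Φ : Θ → ℝ) : ℝ :=
  ∫ θ, Real.exp (-(Φ θ)) ∂μ

/-- The posterior `μ_Φ`, with density `exp (-Φ) / Z_{Φ,μ}` with respect to `μ`. -/
noncomputable def post [MeasurableSpace Θ] (μ : Measure Θ) (Φ : Θ → ℝ) : Measure Θ :=
  μ.withDensity fun θ => ENNReal.ofReal (Real.exp (-(Φ θ)) / evid μ Φ)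

/-- The (topological) support of a measure: the set of points all of whose open
neighbourhoods have positive measure. -/
def msupport [TopologicalSpace Θ] [MeasurableSpace Θ] (μ : Measure Θ) : Set Θ :=
  {x | ∀ U : Set Θ, IsOpen U → x ∈ U → 0 < μ U}

/-- The Lipschitz constant `‖h‖_{Lip(M,d)} ∈ [0,∞]` of `h` on the set `M`. -/
noncomputable def lipConst [PseudoMetricSpace Θ] (h : Θ → ℝ) (M : Set Θ) : ℝ≥0∞ :=
  ⨆ x ∈ M, ⨆ y ∈ M, ⨆ (_ : x ≠ y), ENNReal.ofReal (|h x - h y| / dist x y)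

lemma integral_post_eq [MeasurableSpace Θ] (μ : Measure Θ) (Φ : Θ → ℝ)
    (hm : Measurable Φ) (f : Θ → ℝ) :
    ∫ x, f x ∂(post μ Φ) = (evid μ Φ)⁻¹ * ∫ θ, f θ * Real.exp (-(Φ θ)) ∂μ := by
  have hd : Measurable fun θ => (Real.exp (-(Φ θ)) / evid μ Φ).toNNReal :=
    ((Real.measurable_exp.comp hm.neg).div_const _).real_toNNReal
  have : post μ Φ = μ.withDensity fun θ =>
      ((Real.exp (-(Φ θ)) / evid μ Φ).toNNReal : ℝ≥0∞) := rfl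
  rw [this, integral_withDensity_eq_integral_smul hd]
  rw [← integral_const_mul]
  congr 1 with θ
  have hZ : 0 ≤ evid μ Φ := integral_nonneg fun θ => (Real.exp_pos _).le
  rw [NNReal.smul_def, smul_eq_mul, Real.coe_toNNReal _ (div_nonneg (Real.exp_pos _).le hZ)]
  ring

lemma aux_exp (a b : ℝ) (h : a ≤ b) :
    Real.exp (-b) * (b - a) ≤ Real.exp (-a) - Real.exp (-b) := by
  have h1 : Real.exp (-a) = Real.exp (-b) * Real.exp (b - a) := by
    rw [← Real.exp_add]; ring_nf
  have h2 : (b - a) + 1 ≤ Real.exp (b - a) := Real.add_one_le_exp _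
  nlinarith [Real.exp_pos (-b)]

lemma key_ineq_half (a b A B : ℝ) (ha : a ≤ A) (hb : b ≤ B) (hab : a ≤ b) :
    min (Real.exp (-(2*A))) (Real.exp (-(2*B))) * (a-b)^2
      ≤ (Real.exp (-a) - Real.exp (-b))^2 := by
  have h1 := aux_exp a b hab
  have h2 : Real.exp (-(2*B)) ≤ Real.exp (-b) * Real.exp (-b) := by
    rw [← Real.exp_add]
    exact Real.exp_le_exp.2 (by linarith)
  have h3 : min (Real.exp (-(2*A))) (Real.exp (-(2*B))) ≤ Real.exp (-(2*B)) :=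
    min_le_right _ _
  nlinarith [Real.exp_pos (-b), sq_nonneg (b - a),
    mul_nonneg (Real.exp_pos (-b)).le (sub_nonneg.2 hab)]

lemma key_ineq (a b A B : ℝ) (ha : |a| ≤ A) (hb : |b| ≤ B) :
    min (Real.exp (-(2*A))) (Real.exp (-(2*B))) * (a-b)^2
      ≤ (Real.exp (-a) - Real.exp (-b))^2 := by
  rcases le_total a b with h | h
  · exact key_ineq_half a b A B (le_trans (le_abs_self a) ha) (le_trans (le_abs_self b) hb) h
  · have := key_ineq_half b a B A (le_trans (le_abs_self b) hb) (le_trans (le_abs_self a) ha) h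
    rw [min_comm] at this
    calc min (Real.exp (-(2*A))) (Real.exp (-(2*B))) * (a-b)^2
        = min (Real.exp (-(2*A))) (Real.exp (-(2*B))) * (b-a)^2 := by ring_nf
      _ ≤ (Real.exp (-b) - Real.exp (-a))^2 := this
      _ = (Real.exp (-a) - Real.exp (-b))^2 := by ring

/-- (i) an exact identity for `∫ f dμ_{Φ1} - ∫ f dμ_{Φ2}` for bounded measurable `f`;
(ii) if `Z_{Φ1,μ} = Z_{Φ2,μ}` and `g := e^{-Φ1} - e^{-Φ2}` has Lipschitz constant
`K ∈ (0,∞)` on `supp μ`, lower bounds for the supremum of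
`|∫ f dμ_{Φ1} - ∫ f dμ_{Φ2}|` over functions `f` that are 1-Lipschitz on `supp μ`. -/
theorem stmt18 [MetricSpace Θ] [MeasurableSpace Θ] [BorelSpace Θ]
    (μ : Measure Θ) [IsProbabilityMeasure μ]
    (Φ1 Φ2 : Θ → ℝ) (hm1 : Measurable Φ1) (hm2 : Measurable Φ2)
    (hint1 : Integrable (fun θ => Real.exp (-(Φ1 θ))) μ)
    (hint2 : Integrable (fun θ => Real.exp (-(Φ2 θ))) μ)
    (hZ1 : 0 < evid μ Φ1) (hZ2 : 0 < evid μ Φ2) :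
    (∀ f : Θ → ℝ, Measurable f → (∃ C : ℝ, ∀ x, |f x| ≤ C) →
        (∫ x, f x ∂(post μ Φ1)) - ∫ x, f x ∂(post μ Φ2)
          = (evid μ Φ1)⁻¹
              * ((∫ θ, f θ * (Real.exp (-(Φ1 θ)) - Real.exp (-(Φ2 θ))) ∂μ)
                  + (evid μ Φ2 - evid μ Φ1) * ∫ x, f x ∂(post μ Φ2)))
    ∧ (evid μ Φ1 = evid μ Φ2 →
        0 < lipConst (fun θ => Real.exp (-(Φ1 θ)) - Real.exp (-(Φ2 θ))) (msupport μ) →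
        lipConst (fun θ => Real.exp (-(Φ1 θ)) - Real.exp (-(Φ2 θ))) (msupport μ) < ⊤ →
        (ENNReal.ofReal ((evid μ Φ1)⁻¹
              * (∫ θ, (Real.exp (-(Φ1 θ)) - Real.exp (-(Φ2 θ))) ^ 2 ∂μ)
              / (lipConst (fun θ => Real.exp (-(Φ1 θ)) - Real.exp (-(Φ2 θ)))
                  (msupport μ)).toReal)
            ≤ ⨆ (f : Θ → ℝ) (_ : LipschitzOnWith 1 f (msupport μ)),
                ENNReal.ofReal |(∫ x, f x ∂(post μ Φ1)) - ∫ x, f x ∂(post μ Φ2)|)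
        ∧ (MemLp Φ1 ⊤ μ → MemLp Φ2 ⊤ μ →
            ENNReal.ofReal
                (min (Real.exp (-(2 * essSup (fun θ => |Φ1 θ|) μ)))
                    (Real.exp (-(2 * essSup (fun θ => |Φ2 θ|) μ)))
                  / evid μ Φ1 * (∫ θ, (Φ1 θ - Φ2 θ) ^ 2 ∂μ)
                  / (lipConst (fun θ => Real.exp (-(Φ1 θ)) - Real.exp (-(Φ2 θ)))
                      (msupport μ)).toReal)
              ≤ ⨆ (f : Θ → ℝ) (_ : LipschitzOnWith 1 f (msupport μ)),
                  ENNReal.ofReal |(∫ x, f x ∂(post μ Φ1)) - ∫ x, f x ∂(post μ Φ2)|)) := by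
  have part1 : ∀ f : Θ → ℝ, Measurable f → (∃ C : ℝ, ∀ x, |f x| ≤ C) →
      (∫ x, f x ∂(post μ Φ1)) - ∫ x, f x ∂(post μ Φ2)
        = (evid μ Φ1)⁻¹
            * ((∫ θ, f θ * (Real.exp (-(Φ1 θ)) - Real.exp (-(Φ2 θ))) ∂μ)
                + (evid μ Φ2 - evid μ Φ1) * ∫ x, f x ∂(post μ Φ2)) := by
    intro f hf hb
    have hb' : ∃ C, ∀ x, ‖f x‖ ≤ C := by simpa [Real.norm_eq_abs] using hb
    have i1 : Integrable (fun θ => f θ * Real.exp (-(Φ1 θ))) μ :=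
      hint1.bdd_mul hf.aestronglyMeasurable (Filter.Eventually.of_forall hb'.choose_spec)
    have i2 : Integrable (fun θ => f θ * Real.exp (-(Φ2 θ))) μ :=
      hint2.bdd_mul hf.aestronglyMeasurable (Filter.Eventually.of_forall hb'.choose_spec)
    have hsub : (∫ θ, f θ * (Real.exp (-(Φ1 θ)) - Real.exp (-(Φ2 θ))) ∂μ)
        = (∫ θ, f θ * Real.exp (-(Φ1 θ)) ∂μ) - ∫ θ, f θ * Real.exp (-(Φ2 θ)) ∂μ := by
      simp_rw [mul_sub]
      exact integral_sub i1 i2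
    rw [integral_post_eq μ Φ1 hm1 f, integral_post_eq μ Φ2 hm2 f, hsub]
    field_simp
    ring
  refine ⟨part1, fun hZeq hK0 hKtop => ?_⟩
  set g : Θ → ℝ := fun θ => Real.exp (-(Φ1 θ)) - Real.exp (-(Φ2 θ)) with hgdef
  have hgm : Measurable g :=
    (Real.measurable_exp.comp hm1.neg).sub (Real.measurable_exp.comp hm2.neg)
  set M := msupport μ with hM
  set L := lipConst g M with hL
  set K := L.toReal with hK
  have hKpos : 0 < K := ENNReal.toReal_pos hK0.ne' hKtop.ne
  set S := ⨆ (f : Θ → ℝ) (_ : LipschitzOnWith 1 f M),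
      ENNReal.ofReal |(∫ x, f x ∂(post μ Φ1)) - ∫ x, f x ∂(post μ Φ2)| with hS
  have hgLip : ∀ x ∈ M, ∀ y ∈ M, |g x - g y| ≤ K * dist x y := by
    intro x hx y hy
    rcases eq_or_ne x y with rfl | hxy
    · simp
    have h1 : ENNReal.ofReal (|g x - g y| / dist x y) ≤ L :=
      le_iSup₂_of_le x hx (le_iSup₂_of_le y hy (le_iSup_of_le hxy le_rfl))
    rw [← ENNReal.ofReal_toReal hKtop.ne] at h1
    have h2 : |g x - g y| / dist x y ≤ K := (ENNReal.ofReal_le_ofReal_iff hKpos.le).1 h1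
    have hd : 0 < dist x y := dist_pos.2 hxy
    exact (div_le_iff₀ hd).1 h2
  -- the clamped test functions
  set F : ℕ → Θ → ℝ := fun n θ => max (-((n:ℝ)+1)) (min ((n:ℝ)+1) (g θ / K)) with hF
  have hFm : ∀ n, Measurable (F n) :=
    fun n => measurable_const.max (measurable_const.min (hgm.div_const K))
  have hFb : ∀ n x, |F n x| ≤ (n:ℝ)+1 := by
    intro n x
    rw [abs_le]
    refine ⟨le_max_left _ _, max_le (neg_le_self (by positivity)) (min_le_left _ _)⟩
  have hFeq : ∀ (n : ℕ) (x : Θ), |g x / K| ≤ (n:ℝ)+1 → F n x = g x / K := by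
    intro n x hx
    obtain ⟨h1, h2⟩ := abs_le.1 hx
    rw [hF]
    simp only
    rw [min_eq_right h2, max_eq_right h1]
  have hFabs : ∀ n x, |F n x| ≤ |g x| / K := by
    intro n x
    rcases le_total 0 (g x) with h | h
    · have h0 : 0 ≤ g x / K := div_nonneg h hKpos.le
      have hFx : F n x = min ((n:ℝ)+1) (g x / K) :=
        max_eq_right (le_min (neg_le_self (by positivity)) (le_trans (neg_nonpos.2 (by positivity)) h0))
      rw [hFx, abs_of_nonneg (le_min (by positivity) h0), abs_of_nonneg h]
      exact min_le_right _ _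
    · have h0 : g x / K ≤ 0 := div_nonpos_of_nonpos_of_nonneg h hKpos.le
      have hFx : F n x = max (-((n:ℝ)+1)) (g x / K) := by
        rw [hF]; simp only
        rw [min_eq_right (le_trans h0 (by positivity))]
      have hle : F n x ≤ 0 := by
        rw [hFx]; exact max_le (neg_nonpos.2 (by positivity)) h0
      have hge : g x / K ≤ F n x := by rw [hFx]; exact le_max_right _ _
      rw [abs_of_nonpos hle, abs_of_nonpos h]
      rw [neg_div]
      linarith
  have hsign : ∀ n x, 0 ≤ F n x * g x := by
    intro n x
    rcases le_total 0 (g x) with h | h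
    · refine mul_nonneg ?_ h
      refine le_trans (le_min (by positivity) (div_nonneg h hKpos.le)) (le_max_right _ _)
    · have hF0 : F n x ≤ 0 := max_le (neg_nonpos.2 (by positivity))
        (le_trans (min_le_right _ _) (div_nonpos_of_nonpos_of_nonneg h hKpos.le))
      rw [← neg_mul_neg]
      exact mul_nonneg (neg_nonneg.2 hF0) (neg_nonneg.2 h)
  have hlip : ∀ n, LipschitzOnWith 1 (F n) M := by
    intro n
    apply LipschitzOnWith.of_dist_le_mul
    intro x hx y hy
    rw [NNReal.coe_one, one_mul, Real.dist_eq]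
    have step1 : |F n x - F n y| ≤ |g x / K - g y / K| := by
      rw [hF]; simp only
      rw [max_comm (-((n:ℝ)+1)) _, max_comm (-((n:ℝ)+1)) _]
      refine le_trans (abs_max_sub_max_le_abs _ _ _) ?_
      refine le_trans (abs_min_sub_min_le_max _ _ _ _) ?_
      simp
    refine le_trans step1 ?_
    rw [div_sub_div_same, abs_div, abs_of_pos hKpos, div_le_iff₀ hKpos]
    calc |g x - g y| ≤ K * dist x y := hgLip x hx y hy
      _ = dist x y * K := mul_comm _ _
  -- main estimate, assuming integrability of g²
  have main : Integrable (fun θ => g θ ^ 2) μ →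
      ENNReal.ofReal ((evid μ Φ1)⁻¹ * (∫ θ, g θ ^ 2 ∂μ) / K) ≤ S := by
    intro hg2
    have key : ∀ n : ℕ, (∫ x, F n x ∂(post μ Φ1)) - ∫ x, F n x ∂(post μ Φ2)
        = (evid μ Φ1)⁻¹ * ∫ θ, F n θ * g θ ∂μ := by
      intro n
      rw [part1 (F n) (hFm n) ⟨(n:ℝ)+1, hFb n⟩, ← hZeq, sub_self, zero_mul, add_zero]
    have hconv : Tendsto (fun n => ∫ θ, F n θ * g θ ∂μ) atTop
        (𝓝 (∫ θ, g θ ^ 2 / K ∂μ)) := by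
      apply tendsto_integral_of_dominated_convergence (fun θ => g θ ^ 2 / K)
      · exact fun n => ((hFm n).mul hgm).aestronglyMeasurable
      · exact hg2.div_const K
      · intro n
        filter_upwards with x
        rw [Real.norm_eq_abs, abs_mul]
        have habs2 : |g x| * |g x| = g x ^ 2 := by rw [← abs_mul, abs_mul_self, sq]
        calc |F n x| * |g x| ≤ (|g x| / K) * |g x| :=
              mul_le_mul_of_nonneg_right (hFabs n x) (abs_nonneg _)
          _ = g x ^ 2 / K := by rw [div_mul_eq_mul_div, habs2]
      · filter_upwards with θ
        have hev : ∀ᶠ n : ℕ in atTop, F n θ * g θ = g θ ^ 2 / K := by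
          filter_upwards [eventually_ge_atTop ⌈|g θ| / K⌉₊] with n hn
          have hb : |g θ / K| ≤ (n:ℝ)+1 := by
            rw [abs_div, abs_of_pos hKpos]
            calc |g θ| / K ≤ (⌈|g θ| / K⌉₊ : ℝ) := Nat.le_ceil _
              _ ≤ (n:ℝ) := Nat.cast_le.2 hn
              _ ≤ (n:ℝ)+1 := by linarith
          rw [hFeq n θ hb, div_mul_eq_mul_div, ← sq]
        exact Tendsto.congr' (EventuallyEq.symm hev) tendsto_const_nhds
    have hmono_n : ∀ n : ℕ,
        ENNReal.ofReal ((evid μ Φ1)⁻¹ * ∫ θ, F n θ * g θ ∂μ) ≤ S := by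
      intro n
      have h1 : 0 ≤ (evid μ Φ1)⁻¹ * ∫ θ, F n θ * g θ ∂μ :=
        mul_nonneg (inv_nonneg.2 hZ1.le) (integral_nonneg fun θ => hsign n θ)
      calc ENNReal.ofReal ((evid μ Φ1)⁻¹ * ∫ θ, F n θ * g θ ∂μ)
          = ENNReal.ofReal |(∫ x, F n x ∂(post μ Φ1)) - ∫ x, F n x ∂(post μ Φ2)| := by
            rw [key n, abs_of_nonneg h1]
        _ ≤ S := le_iSup₂_of_le (F n) (hlip n) le_rfl
    have h3 : Tendsto (fun n : ℕ =>
        ENNReal.ofReal ((evid μ Φ1)⁻¹ * ∫ θ, F n θ * g θ ∂μ)) atTop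
        (𝓝 (ENNReal.ofReal ((evid μ Φ1)⁻¹ * ∫ θ, g θ ^ 2 / K ∂μ))) :=
      (ENNReal.continuous_ofReal.tendsto _).comp (hconv.const_mul _)
    have h4 : (evid μ Φ1)⁻¹ * ∫ θ, g θ ^ 2 / K ∂μ
        = (evid μ Φ1)⁻¹ * (∫ θ, g θ ^ 2 ∂μ) / K := by
      rw [integral_div, mul_div_assoc]
    rw [← h4]
    exact le_of_tendsto h3 (Filter.Eventually.of_forall hmono_n)
  constructor
  · by_cases hg2 : Integrable (fun θ => g θ ^ 2) μ
    · simpa only [hgdef] using main hg2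
    · have h0 : (∫ θ, (Real.exp (-(Φ1 θ)) - Real.exp (-(Φ2 θ))) ^ 2 ∂μ) = 0 :=
        integral_undef (by simpa only [hgdef] using hg2)
      rw [h0]
      simp
  · intro hL1 hL2
    set E1 := essSup (fun θ => |Φ1 θ|) μ with hE1
    set E2 := essSup (fun θ => |Φ2 θ|) μ with hE2
    have haeb : ∀ (Φ : Θ → ℝ), MemLp Φ ⊤ μ →
        ∀ᵐ θ ∂μ, |Φ θ| ≤ essSup (fun θ => |Φ θ|) μ := by
      intro Φ hΦ
      have hlt : eLpNormEssSup Φ μ < ⊤ := by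
        have := hΦ.2; rwa [eLpNorm_exponent_top] at this
      have hbd : Filter.IsBoundedUnder (· ≤ ·) (ae μ) fun θ => |Φ θ| := by
        refine ⟨(eLpNormEssSup Φ μ).toReal, ?_⟩
        rw [Filter.eventually_map]
        filter_upwards [ae_le_eLpNormEssSup (f := Φ) (μ := μ)] with θ hθ
        calc |Φ θ| = ((‖Φ θ‖₊ : ℝ≥0∞)).toReal := by
              simp [Real.norm_eq_abs]
          _ ≤ (eLpNormEssSup Φ μ).toReal := ENNReal.toReal_mono hlt.ne hθ
      exact ae_le_essSup hbd
    have hae1 : ∀ᵐ θ ∂μ, |Φ1 θ| ≤ E1 := haeb Φ1 hL1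
    have hae2 : ∀ᵐ θ ∂μ, |Φ2 θ| ≤ E2 := haeb Φ2 hL2
    have hae : ∀ᵐ θ ∂μ,
        min (Real.exp (-(2 * E1))) (Real.exp (-(2 * E2))) * (Φ1 θ - Φ2 θ) ^ 2
          ≤ g θ ^ 2 := by
      filter_upwards [hae1, hae2] with θ h1 h2
      simpa [hgdef] using key_ineq (Φ1 θ) (Φ2 θ) E1 E2 h1 h2
    have hintsq : Integrable (fun θ => (Φ1 θ - Φ2 θ) ^ 2) μ := by
      refine Integrable.mono' (integrable_const ((E1 + E2) ^ 2))
        ((hm1.sub hm2).pow_const 2).aestronglyMeasurable ?_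
      filter_upwards [hae1, hae2] with θ h1 h2
      rw [Real.norm_eq_abs, abs_of_nonneg (sq_nonneg _)]
      have h3 : |Φ1 θ - Φ2 θ| ≤ E1 + E2 := by
        refine le_trans (abs_sub _ _) ?_
        linarith
      calc (Φ1 θ - Φ2 θ) ^ 2 = |Φ1 θ - Φ2 θ| ^ 2 := (sq_abs _).symm
        _ ≤ (E1 + E2) ^ 2 := by
            exact pow_le_pow_left₀ (abs_nonneg _) h3 2
    have hintg2 : Integrable (fun θ => g θ ^ 2) μ := by
      refine Integrable.mono' (integrable_const ((Real.exp E1 + Real.exp E2) ^ 2))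
        (hgm.pow_const 2).aestronglyMeasurable ?_
      filter_upwards [hae1, hae2] with θ h1 h2
      rw [Real.norm_eq_abs, abs_of_nonneg (sq_nonneg _)]
      have h3 : |g θ| ≤ Real.exp E1 + Real.exp E2 := by
        rw [hgdef]
        refine le_trans (abs_sub _ _) ?_
        rw [abs_of_pos (Real.exp_pos _), abs_of_pos (Real.exp_pos _)]
        have e1 : Real.exp (-(Φ1 θ)) ≤ Real.exp E1 :=
          Real.exp_le_exp.2 (le_trans (neg_le_abs _) h1)
        have e2 : Real.exp (-(Φ2 θ)) ≤ Real.exp E2 :=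
          Real.exp_le_exp.2 (le_trans (neg_le_abs _) h2)
        linarith
      calc g θ ^ 2 = |g θ| ^ 2 := (sq_abs _).symm
        _ ≤ (Real.exp E1 + Real.exp E2) ^ 2 := by
            exact pow_le_pow_left₀ (abs_nonneg _) h3 2
    have hcomp : min (Real.exp (-(2 * E1))) (Real.exp (-(2 * E2)))
        * (∫ θ, (Φ1 θ - Φ2 θ) ^ 2 ∂μ) ≤ ∫ θ, g θ ^ 2 ∂μ := by
      rw [← integral_const_mul]
      exact integral_mono_ae (hintsq.const_mul _) hintg2 hae
    have h5 := main hintg2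
    refine le_trans (ENNReal.ofReal_le_ofReal ?_) h5
    set c0 := min (Real.exp (-(2 * E1))) (Real.exp (-(2 * E2))) with hc0
    set A := ∫ θ, (Φ1 θ - Φ2 θ) ^ 2 ∂μ with hA
    set B := ∫ θ, g θ ^ 2 ∂μ with hB
    have e1 : c0 / evid μ Φ1 * A / K = (c0 * A) * ((evid μ Φ1)⁻¹ * K⁻¹) := by ring
    have e2 : (evid μ Φ1)⁻¹ * B / K = B * ((evid μ Φ1)⁻¹ * K⁻¹) := by ring
    rw [e1, e2]
    exact mul_le_mul_of_nonneg_right hcomp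
      (mul_nonneg (inv_nonneg.2 hZ1.le) (inv_nonneg.2 hKpos.le))


end PaperStmt
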